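/- For every integer n > 3, the T_1(n) list of sequences is forward complete over A = {1, 2, …, n}. -/

import Mathlib

/-- `ρ ∈ [A]_k`: a sequence over `A` of length `k` with pairwise distinct elements. -/
def DistinctSeq (A : Finset ℕ) (k : ℕ) (ρ : List ℕ) : Prop :=
  ρ.length = k ∧ ρ.Nodup ∧ ∀ a ∈ ρ, a ∈ A

/-- `σ` is `k`-complete over `A`: every member of `[A]_k` is a subsequence of `σ`. -/
def IsKComplete (A : Finset ℕ) (k : ℕ) (σ : List ℕ) : Prop :=
  ∀ ρ : List ℕ, DistinctSeq A k ρ → ρ.Sublist σ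

/-- `σ` is a supersequence over `A`: it contains every permutation of `A` as a
subsequence, i.e. it is `|A|`-complete. -/
def IsSupersequence (A : Finset ℕ) (σ : List ℕ) : Prop :=
  IsKComplete A A.card σ

/-- A list of sequences `σ₁, …, σ_n` is forward complete if for every `1 ≤ k ≤ n`,
the concatenation `σ₁σ₂⋯σ_k` is `k`-complete. -/
def ForwardComplete (A : Finset ℕ) (L : List (List ℕ)) : Prop :=
  ∀ k, 1 ≤ k → k ≤ L.length → IsKComplete A k ((L.take k).flatten)

/-- A list of sequences `σ₁, …, σ_n` is backward complete if for every `1 ≤ k ≤ n`,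
the concatenation `σ_{n-k+1}⋯σ_n` is `k`-complete. -/
def BackwardComplete (A : Finset ℕ) (L : List (List ℕ)) : Prop :=
  ∀ k, 1 ≤ k → k ≤ L.length → IsKComplete A k ((L.drop (L.length - k)).flatten)

/-- Strongly complete: both forward and backward complete. -/
def StronglyComplete (A : Finset ℕ) (L : List (List ℕ)) : Prop :=
  ForwardComplete A L ∧ BackwardComplete A L

/-- The `T₁(n)` sequences (1-indexed): `T1 n k` is the `k`-th sequence `σ_k`.
`σ₁ = ⟨1,…,n⟩`, `σ₂ = ⟨1,…,n-1⟩`, for `2 < k < n`,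
`σ_k = σ_{k-2}[-1] · σ_{k-1}[1,-2]`, and `σ_n = σ_{n-2}[-1] · σ_{n-1}[1,-1]`. -/
def T1 (n : ℕ) : ℕ → List ℕ
  | 0 => []
  | 1 => List.range' 1 n
  | 2 => List.range' 1 (n-1)
  | (k+3) =>
      (T1 n (k+1)).getLastD 0 ::
        (if k + 3 = n then T1 n (k+2) else (T1 n (k+2)).dropLast)



lemma getLastD_append' {l l' : List ℕ} (h : l' ≠ []) (d : ℕ) :
    (l ++ l').getLastD d = l'.getLastD d := by
  have := List.getLast?_isSome.2 h
  simp only [List.getLastD_eq_getLast?, List.getLast?_append]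
  cases hx : l'.getLast? with
  | none => simp [hx] at this
  | some x => simp [hx]

lemma getLastD_range' (s m d : ℕ) (h : 0 < m) :
    (List.range' s m).getLastD d = s + m - 1 := by
  obtain ⟨m', rfl⟩ := Nat.exists_eq_add_of_lt h
  rw [Nat.zero_add, List.range'_concat, List.getLastD_concat]
  omega


lemma T1_formula (n : ℕ) :
    ∀ i m, i + m + 3 = n → T1 n (i+2) = List.range' (m+4) i ++ List.range' 1 (m+2)
  | 0, m, h => by subst h; simp [T1]
  | 1, m, h => by
      have h3 : ¬ (0 + 3 = n) := by omega
      show T1 n 3 = _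
      rw [show (3 : ℕ) = 0 + 3 by rfl, T1, if_neg h3]
      show (List.range' 1 n).getLastD 0 :: (List.range' 1 (n-1)).dropLast = _
      rw [getLastD_range' _ _ _ (by omega), show 1 + n - 1 = m + 4 by omega,
        show n - 1 = (m+2) + 1 by omega, List.range'_concat, List.dropLast_concat]
      simp [List.range'_succ]
  | (i+2), m, h => by
      have ih1 := T1_formula n i (m+2) (by omega)
      have ih2 := T1_formula n (i+1) (m+1) (by omega)
      have h3 : ¬ (i + 1 + 3 = n) := by omega
      show T1 n (i+1+3) = _
      rw [T1, if_neg h3, show i + 1 + 1 = i + 2 from rfl, ih1,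
        show i + 1 + 2 = (i+1) + 2 from rfl, ih2]
      rw [getLastD_append' (by simp) 0, getLastD_range' _ _ _ (by omega)]
      rw [show List.range' 1 (m+1+2) = List.range' 1 (m+2) ++ [1 + 1*(m+2)] from
        List.range'_concat (s := 1) (n := m+2), ← List.append_assoc, List.dropLast_concat]
      rw [show 1 + (m+2+2) - 1 = m + 4 by omega]
      rw [show List.range' (m+4) (i+2) = (m+4) :: List.range' (m+4+1) (i+1) from
        List.range'_succ (s := _) (n := _) (step := _)]
      simp [show m + 1 + 4 = m + 4 + 1 by rfl]
  termination_by i => i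

lemma T1_top (n : ℕ) (hn : 3 < n) :
    T1 n n = List.range' 3 (n-2) ++ [1, 2] := by
  obtain ⟨m, rfl⟩ : ∃ m, n = m + 4 := ⟨n - 4, by omega⟩
  have e1 := T1_formula (m+4) m 1 (by omega)
  have e2 := T1_formula (m+4) (m+1) 0 (by omega)
  show T1 (m+4) (m+1+3) = _
  rw [T1, if_pos rfl, show m + 1 + 1 = m + 2 from rfl, e1,
    show m + 1 + 2 = (m+1) + 2 from rfl, e2]
  rw [getLastD_append' (by simp) 0, getLastD_range' _ _ _ (by omega)]
  rw [show 1 + 3 - 1 = 3 by rfl, show m + 4 - 2 = (m+1) + 1 by omega, List.range'_succ]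
  simp [List.range'_succ, show (0:ℕ)+4 = 4 by rfl]

lemma T1_ne_nil (n j : ℕ) (hn : 3 < n) (h1 : 1 ≤ j) (h2 : j ≤ n) : T1 n j ≠ [] := by
  match j, h1, h2 with
  | 1, _, _ => simp [T1]; omega
  | (i+2), _, h2 =>
    rcases eq_or_lt_of_le h2 with he | hl
    · rw [he, T1_top n hn]; simp
    · rw [T1_formula n i (n - i - 3) (by omega)]; simp

lemma T1_getLastD (n j : ℕ) (hn : 3 < n) (h1 : 1 ≤ j) (h2 : j + 1 ≤ n) :
    (T1 n j).getLastD 0 = n - j + 1 := by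
  match j, h1 with
  | 1, _ =>
    show (List.range' 1 n).getLastD 0 = _
    rw [getLastD_range' _ _ _ (by omega)]; omega
  | (i+2), _ =>
    rw [T1_formula n i (n - i - 3) (by omega), getLastD_append' (by simp) 0,
      getLastD_range' _ _ _ (by omega)]
    omega

lemma T1_pair (n j : ℕ) (hn : 3 < n) (h1 : 1 ≤ j) (h2 : j + 1 ≤ n) :
    ∀ b ∈ Finset.Icc 1 n, b ∈ T1 n (j+1) ∨ b = (T1 n j).getLastD 0 := by
  intro b hb
  rw [Finset.mem_Icc] at hb
  rw [T1_getLastD n j hn h1 h2]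
  rcases eq_or_lt_of_le h2 with he | hl
  · left
    rw [he, T1_top n hn]
    simp only [List.mem_append, List.mem_range'_1, List.mem_cons]
    omega
  · match j, h1 with
    | 1, _ =>
      show b ∈ List.range' 1 (n-1) ∨ _
      simp only [List.mem_range'_1]
      omega
    | (i+2), _ =>
      rw [show i + 2 + 1 = (i+1) + 2 from rfl,
        T1_formula n (i+1) (n - i - 4) (by omega)]
      simp only [List.mem_append, List.mem_range'_1]
      omega

lemma key (A : Finset ℕ) : ∀ (ρ : List ℕ) (L : List (List ℕ)),
    ρ.Nodup → ρ.length ≤ L.length → (∀ a ∈ ρ, a ∈ A) →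
    (∀ a ∈ ρ, a ∈ L.headD []) →
    (∀ τ ∈ L.tail, τ ≠ []) →
    List.Chain' (fun u v => ∀ b ∈ A, b ∈ v ∨ b = u.getLastD 0) L →
    ρ.Sublist L.flatten
  | [], _, _, _, _, _, _, _ => List.nil_sublist _
  | a :: ρ', [], _, hlen, _, _, _, _ => absurd hlen (by simp)
  | a :: ρ', τ :: L', hnd, hlen, hA, hhead, hne, hch => by
    have ha : a ∈ τ := hhead a (List.mem_cons_self (a := a) (l := ρ'))
    obtain ⟨t₁, t₂, rfl⟩ := List.append_of_mem ha
    match L' with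
    | [] =>
        have hρ' : ρ' = [] := by
          have h := hlen
          simp only [List.length_cons, List.length_nil] at h
          exact List.eq_nil_of_length_eq_zero (by omega)
        subst hρ'
        simp only [List.flatten_cons, List.flatten_nil, List.append_nil]
        exact List.singleton_sublist.2 ha
    | τ₂ :: L'' =>
        have hτ₂ : τ₂ ≠ [] := hne τ₂ (by simp)
        obtain ⟨hrel, hch'⟩ := List.isChain_cons_cons.mp hch
        have hIH : ρ'.Sublist (((t₂ ++ τ₂) :: L'').flatten) := by
          apply key A ρ' ((t₂ ++ τ₂) :: L'') (List.Nodup.of_cons hnd)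
          · simp only [List.length_cons] at hlen ⊢; omega
          · exact fun b hb => hA b (List.mem_cons_of_mem _ hb)
          · -- head condition
            intro b hb
            have hbA := hA b (List.mem_cons_of_mem _ hb)
            show b ∈ t₂ ++ τ₂
            rcases hrel b hbA with h | h
            · exact List.mem_append_right _ h
            · have hba : b ≠ a := fun e => (List.nodup_cons.mp hnd).1 (e ▸ hb)
              cases t₂ with
              | nil =>
                exfalso; apply hba; rw [h]
                rw [getLastD_append' (l := t₁) (l' := [a]) (by simp) 0]
                rfl
              | cons c t =>
                have hmem : b ∈ (c :: t : List ℕ) := by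
                  rw [h, getLastD_append' (by simp) 0,
                    show (a :: c :: t).getLastD 0 = t.getLastD c by
                      rw [List.getLastD_cons, List.getLastD_cons]]
                  exact List.getLastD_mem_cons (l := t) (a := c)
                exact List.mem_append_left _ hmem
          · exact fun τ hτ => hne τ (List.mem_cons_of_mem _ hτ)
          · -- chain condition
            obtain ⟨hrel2, hch''⟩ := List.isChain_cons.mp hch'
            refine List.isChain_cons.mpr ⟨?_, hch''⟩
            intro c hc b hbA
            rcases hrel2 c hc b hbA with h | h
            · exact Or.inl h
            · exact Or.inr (h.trans (getLastD_append' hτ₂ 0).symm)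
        have hstep : ρ'.Sublist (t₂ ++ (τ₂ :: L'').flatten) := by
          simpa [List.append_assoc] using hIH
        have hs1 : (a :: ρ').Sublist (a :: (t₂ ++ (τ₂ :: L'').flatten)) :=
          hstep.cons₂ a
        have hs2 := List.sublist_append_right t₁ (a :: (t₂ ++ (τ₂ :: L'').flatten))
        have he : t₁ ++ (a :: (t₂ ++ (τ₂ :: L'').flatten))
            = ((t₁ ++ a :: t₂) :: τ₂ :: L'').flatten := by simp
        exact he ▸ (hs1.trans hs2)
  termination_by ρ => ρ.length


/-- The `T₁(n)` list of sequences `σ₁, σ₂, …, σ_n`. -/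
def T1List (n : ℕ) : List (List ℕ) := (List.range n).map (fun i => T1 n (i+1))

/-- **Lemma 7, second part.** For every integer `n > 3`, the `T₁(n)`
list of sequences is forward complete over `A = {1,…,n}`. -/
theorem T1List_forwardComplete (n : ℕ) (hn : 3 < n) :
    ForwardComplete (Finset.Icc 1 n) (T1List n) := by
  intro k hk1 hk2 ρ hρ
  obtain ⟨hlen, hnd, hA⟩ := hρ
  have hkn : k ≤ n := by simpa [T1List] using hk2
  obtain ⟨k', rfl⟩ : ∃ k', k = k' + 1 := ⟨k - 1, by omega⟩
  have htake : (T1List n).take (k'+1)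
      = (List.range (k'+1)).map (fun i => T1 n (i+1)) := by
    rw [T1List, ← List.map_take, List.take_range, Nat.min_eq_left hkn]
  rw [htake]
  apply key (Finset.Icc 1 n) ρ _ hnd (by simp [hlen]) hA
  · -- head condition
    intro a haρ
    have hmem := hA a haρ
    rw [Finset.mem_Icc] at hmem
    rw [List.range_succ_eq_map]
    show a ∈ T1 n 1
    show a ∈ List.range' 1 n
    rw [List.mem_range'_1]
    omega
  · -- nonempty tails
    intro τ hτ
    have hτ' := List.mem_of_mem_tail hτ
    obtain ⟨i, hi, rfl⟩ := List.mem_map.mp hτ'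
    exact T1_ne_nil n (i+1) hn (by omega)
      (by have := List.mem_range.mp hi; omega)
  · -- chain condition
    show List.IsChain _ _
    rw [List.isChain_map, show k' + 1 = Nat.succ k' from rfl,
      List.isChain_range_succ]
    intro m hm
    exact T1_pair n (m+1) hn (by omega) (by omega)
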